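/- Let H be a Hopf algebra, D an algebra in H-modules, and μ : H → D a quantum moment map (i.e. μ(h)·a = (h₍₁₎ ▷ a)·μ(h₍₂₎) for all h ∈ H, a ∈ D). Let η : H → ℂ be a character and I_η the left ideal of D generated by {μ(h) − η(h)·1 : h ∈ H}. Then I_η is an H-submodule of D, and the multiplication of D induces a well-defined associative algebra structure on the H-invariants (D/I_η)^H. -/

import Mathlib

set_option synthInstance.maxHeartbeats 1000000
set_option maxHeartbeats 1000000
set_option linter.unusedVariables false


noncomputable section

open TensorProduct

variable {H D : Type*} [Ring H] [HopfAlgebra ℂ H] [Ring D] [Algebra ℂ D]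

/-- Given an action `act : H → End(D)`, the map `H ⊗ (D ⊗ D) → D`,
`h ⊗ a ⊗ b ↦ Σ (h₍₁₎ ▷ a) * (h₍₂₎ ▷ b)`, used to express that `D` is an `H`-module
algebra. -/
def moduleAlgebraRHS (act : H →ₗ[ℂ] D →ₗ[ℂ] D) : H ⊗[ℂ] (D ⊗[ℂ] D) →ₗ[ℂ] D :=
  LinearMap.mul' ℂ D
    ∘ₗ TensorProduct.map (TensorProduct.lift act) (TensorProduct.lift act)
    ∘ₗ (TensorProduct.tensorTensorTensorComm ℂ H H D D).toLinearMap
    ∘ₗ TensorProduct.map Coalgebra.comul LinearMap.id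

/-- Given an action `act : H → End(D)` and a linear map `μ : H → D`, the map
`H ⊗ D → D`, `h ⊗ a ↦ Σ (h₍₁₎ ▷ a) · μ(h₍₂₎)`, appearing on the right-hand side of the
quantum moment map identity. -/
def momentRHS (act : H →ₗ[ℂ] D →ₗ[ℂ] D) (μ : H →ₗ[ℂ] D) : H ⊗[ℂ] D →ₗ[ℂ] D :=
  LinearMap.mul' ℂ D
    ∘ₗ TensorProduct.map (TensorProduct.lift act) μ
    ∘ₗ (TensorProduct.assoc ℂ H D H).symm.toLinearMap
    ∘ₗ TensorProduct.map LinearMap.id (TensorProduct.comm ℂ H D).toLinearMap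
    ∘ₗ (TensorProduct.assoc ℂ H H D).toLinearMap
    ∘ₗ TensorProduct.map Coalgebra.comul LinearMap.id

lemma momentRHS_repr (act : H →ₗ[ℂ] D →ₗ[ℂ] D) (ν : H →ₗ[ℂ] D) (h : H) (a : D)
    (r : Coalgebra.Repr ℂ h (H × H)) :
    momentRHS act ν (h ⊗ₜ[ℂ] a) = ∑ i ∈ r.index, act (r.left i) a * ν (r.right i) := by
  simp only [momentRHS, LinearMap.coe_comp, Function.comp_apply, TensorProduct.map_tmul,
    LinearMap.id_coe, id_eq, ← r.eq, TensorProduct.sum_tmul, map_sum,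
    LinearEquiv.coe_coe, TensorProduct.assoc_tmul, TensorProduct.comm_tmul,
    TensorProduct.assoc_symm_tmul, TensorProduct.lift.tmul, LinearMap.mul'_apply]

lemma moduleAlgebraRHS_repr (act : H →ₗ[ℂ] D →ₗ[ℂ] D) (h : H) (a b : D)
    (r : Coalgebra.Repr ℂ h (H × H)) :
    moduleAlgebraRHS act (h ⊗ₜ[ℂ] (a ⊗ₜ[ℂ] b))
      = ∑ i ∈ r.index, act (r.left i) a * act (r.right i) b := by
  simp only [moduleAlgebraRHS, LinearMap.coe_comp, Function.comp_apply, TensorProduct.map_tmul,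
    LinearMap.id_coe, id_eq, ← r.eq, TensorProduct.sum_tmul, map_sum,
    LinearEquiv.coe_coe, TensorProduct.tensorTensorTensorComm_tmul,
    TensorProduct.lift.tmul, LinearMap.mul'_apply]

/-- let `H` be a Hopf algebra, `D` an `H`-module algebra (action `▷`),
`μ : H → D` a quantum moment map, i.e. `μ(h)·a = Σ (h₍₁₎ ▷ a)·μ(h₍₂₎)`, and
`η : H → ℂ` a character.  Let `I_η` be the left ideal of `D` generated by the elements
`μ(h) − η(h)·1`.  Then `I_η` is an `H`-submodule of `D`, and the multiplication of `D`
induces a well-defined associative (unital, ℂ-bilinear) algebra structure on the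
`H`-invariants of `D/I_η`. -/
theorem quantum_hamiltonian_reduction
    (act : H →ₗ[ℂ] D →ₗ[ℂ] D)
    -- `D` is an `H`-module:
    (hact_one : ∀ a : D, act 1 a = a)
    (hact_mul : ∀ (h h' : H) (a : D), act (h * h') a = act h (act h' a))
    -- `D` is an `H`-module algebra:
    (hma : ∀ (h : H) (a b : D),
      act h (a * b) = moduleAlgebraRHS act (h ⊗ₜ[ℂ] (a ⊗ₜ[ℂ] b)))
    (hunit : ∀ h : H, act h 1 = (Coalgebra.counit (R := ℂ) h) • (1 : D))
    -- `μ` is a quantum moment map: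
    (μ : H →ₐ[ℂ] D)
    (hμ : ∀ (h : H) (a : D), μ h * a = momentRHS act μ.toLinearMap (h ⊗ₜ[ℂ] a))
    -- a character of `H`:
    (η : H →ₐ[ℂ] ℂ) :
    letI Iη : Submodule D D :=
      Submodule.span D (Set.range fun h : H => μ h - algebraMap ℂ D (η h))
    letI Inv : D → Prop := fun a =>
      ∀ h : H, act h a - (Coalgebra.counit (R := ℂ) h) • a ∈ Iη
    letI mk : D → D ⧸ Iη := Submodule.Quotient.mk
    letI InvQ : (D ⧸ Iη) → Prop := fun x => ∃ a, Inv a ∧ mk a = x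
    -- (1) `I_η` is an `H`-submodule:
    (∀ (h : H) (a : D), a ∈ Iη → act h a ∈ Iη) ∧
    -- (2) multiplication descends to a well-defined associative unital ℂ-bilinear
    -- product on the `H`-invariants of `D/I_η`:
    (∃ mul : (D ⧸ Iη) → (D ⧸ Iη) → (D ⧸ Iη),
      (∀ a b : D, Inv a → Inv b → mul (mk a) (mk b) = mk (a * b)) ∧
      (∀ x y, InvQ x → InvQ y → InvQ (mul x y)) ∧
      (∀ x y z, InvQ x → InvQ y → InvQ z → mul (mul x y) z = mul x (mul y z)) ∧
      (InvQ (mk 1)) ∧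
      (∀ x, InvQ x → mul (mk 1) x = x ∧ mul x (mk 1) = x) ∧
      (∀ x y z, InvQ x → InvQ y → InvQ z →
        mul x (y + z) = mul x y + mul x z ∧ mul (y + z) x = mul y x + mul z x) ∧
      (∀ (r : ℂ) (x y), InvQ x → InvQ y →
        mul (r • x) y = r • mul x y ∧ mul x (r • y) = r • mul x y)) := by
    classical
  set Iη : Submodule D D :=
    Submodule.span D (Set.range fun h : H => μ h - algebraMap ℂ D (η h)) with hIη
  let Inv : D → Prop := fun a =>
    ∀ h : H, act h a - (Coalgebra.counit (R := ℂ) h) • a ∈ Iη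
  let mk : D → D ⧸ Iη := Submodule.Quotient.mk
  let InvQ : (D ⧸ Iη) → Prop := fun x => ∃ a, Inv a ∧ mk a = x
  -- basic membership facts
  have gen_mem : ∀ g : H, μ g - algebraMap ℂ D (η g) ∈ Iη := fun g =>
    Submodule.subset_span ⟨g, rfl⟩
  have mulmem : ∀ (d x : D), x ∈ Iη → d * x ∈ Iη := fun d x hx => by
    simpa [smul_eq_mul] using Iη.smul_mem d hx
  have smulmem : ∀ (c : ℂ) (x : D), x ∈ Iη → c • x ∈ Iη := fun c x hx => by
    rw [Algebra.smul_def]; exact mulmem _ _ hx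
  -- Sweedler forms of the hypotheses
  have hma' : ∀ (h : H) (a b : D) (r : Coalgebra.Repr ℂ h (H × H)),
      act h (a * b) = ∑ i ∈ r.index, act (r.left i) a * act (r.right i) b := fun h a b r => by
    rw [hma, moduleAlgebraRHS_repr act h a b r]
  have hμ' : ∀ (h : H) (a : D) (r : Coalgebra.Repr ℂ h (H × H)),
      μ h * a = ∑ i ∈ r.index, act (r.left i) a * μ (r.right i) := fun h a r => by
    rw [hμ, momentRHS_repr act μ.toLinearMap h a r]; rfl
  -- counit identities
  have csum_left : ∀ (h : H) (r : Coalgebra.Repr ℂ h (H × H)),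
      ∑ i ∈ r.index, Coalgebra.counit (R := ℂ) (r.right i) • r.left i = h := fun h r => by
    have h1 := congrArg (TensorProduct.rid ℂ H) (Coalgebra.sum_tmul_counit_eq (R := ℂ) r)
    simp only [map_sum, TensorProduct.rid_tmul, one_smul] at h1
    exact h1
  have ηsum : ∀ (h : H) (r : Coalgebra.Repr ℂ h (H × H)),
      ∑ i ∈ r.index, Coalgebra.counit (R := ℂ) (r.left i) * η (r.right i) = η h := fun h r => by
    have h1 := congrArg (TensorProduct.lift ((LinearMap.mul ℂ ℂ).compl₂ η.toLinearMap))
      (Coalgebra.sum_counit_tmul_eq (R := ℂ) r)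
    simp only [map_sum, TensorProduct.lift.tmul, LinearMap.compl₂_apply,
      LinearMap.mul_apply', AlgHom.toLinearMap_apply, one_mul] at h1
    exact h1
  have act_sum : ∀ (h : H) (a : D) (r : Coalgebra.Repr ℂ h (H × H)),
      ∑ i ∈ r.index, Coalgebra.counit (R := ℂ) (r.right i) • act (r.left i) a = act h a :=
    fun h a r => by
      conv_rhs => rw [← csum_left h r]
      simp [map_sum]
  -- μ h * a ≡ Σ η(h₂) • (h₁ ▷ a) mod Iη
  have lemA : ∀ (h : H) (a : D) (r : Coalgebra.Repr ℂ h (H × H)),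
      μ h * a - ∑ i ∈ r.index, η (r.right i) • act (r.left i) a ∈ Iη := by
    intro h a r
    rw [hμ' h a r, ← Finset.sum_sub_distrib]
    refine Submodule.sum_mem _ fun i _ => ?_
    have e : act (r.left i) a * μ (r.right i) - η (r.right i) • act (r.left i) a
        = act (r.left i) a * (μ (r.right i) - algebraMap ℂ D (η (r.right i))) := by
      rw [mul_sub, Algebra.smul_def, Algebra.commutes]
    rw [e]; exact mulmem _ _ (gen_mem _)
  -- for invariant a : μ h * a ≡ η h • a
  have lemB : ∀ (h : H) (a : D), Inv a → μ h * a - η h • a ∈ Iη := by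
    intro h a ha
    set r := Coalgebra.Repr.arbitrary ℂ h with hr
    have h1 := lemA h a r
    have h2 : (∑ i ∈ r.index, η (r.right i) • act (r.left i) a) - η h • a ∈ Iη := by
      have e : (∑ i ∈ r.index, η (r.right i) • act (r.left i) a) - η h • a
          = ∑ i ∈ r.index, η (r.right i) •
              (act (r.left i) a - Coalgebra.counit (R := ℂ) (r.left i) • a) := by
        have e2 : ∑ i ∈ r.index, η (r.right i) •
              (act (r.left i) a - Coalgebra.counit (R := ℂ) (r.left i) • a)
            = (∑ i ∈ r.index, η (r.right i) • act (r.left i) a)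
              - ∑ i ∈ r.index, (Coalgebra.counit (R := ℂ) (r.left i) * η (r.right i)) • a := by
          rw [← Finset.sum_sub_distrib]
          exact Finset.sum_congr rfl fun i _ => by rw [smul_sub, smul_smul, mul_comm]
        rw [e2, ← Finset.sum_smul, ηsum h r]
      rw [e]
      exact Submodule.sum_mem _ fun i _ => smulmem _ _ (ha _)
    simpa using Iη.add_mem h1 h2
  -- Iη * (invariant) ⊆ Iη
  have lemC : ∀ (x : D), x ∈ Iη → ∀ b : D, Inv b → x * b ∈ Iη := by
    intro x hx
    refine Submodule.span_induction (p := fun x _ => ∀ b : D, Inv b → x * b ∈ Iη)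
      ?_ ?_ ?_ ?_ hx
    · rintro _ ⟨g, rfl⟩ b hb
      have e : (μ g - algebraMap ℂ D (η g)) * b = μ g * b - η g • b := by
        rw [sub_mul, Algebra.smul_def]
      rw [e]; exact lemB g b hb
    · intro b _; simp
    · intro x y _ _ ihx ihy b hb
      rw [add_mul]; exact Iη.add_mem (ihx b hb) (ihy b hb)
    · intro d x _ ih b hb
      rw [smul_eq_mul, mul_assoc]; exact mulmem _ _ (ih b hb)
  -- invariants are closed under multiplication
  have lemD : ∀ a b : D, Inv a → Inv b → Inv (a * b) := by
    intro a b ha hb h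
    set r := Coalgebra.Repr.arbitrary ℂ h with hr
    rw [hma' h a b r]
    have key : ∑ i ∈ r.index, act (r.left i) a * act (r.right i) b
        - Coalgebra.counit (R := ℂ) h • (a * b)
        = (∑ i ∈ r.index, act (r.left i) a *
            (act (r.right i) b - Coalgebra.counit (R := ℂ) (r.right i) • b))
          + (act h a - Coalgebra.counit (R := ℂ) h • a) * b := by
      have e1 : ∑ i ∈ r.index, act (r.left i) a *
            (act (r.right i) b - Coalgebra.counit (R := ℂ) (r.right i) • b)
          = (∑ i ∈ r.index, act (r.left i) a * act (r.right i) b) - act h a * b := by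
        rw [show act h a * b = ∑ i ∈ r.index,
            (Coalgebra.counit (R := ℂ) (r.right i) • act (r.left i) a) * b from by
          rw [← Finset.sum_mul, act_sum h a r], ← Finset.sum_sub_distrib]
        refine Finset.sum_congr rfl fun i _ => ?_
        rw [mul_sub, mul_smul_comm, smul_mul_assoc]
      rw [e1, sub_mul, smul_mul_assoc]
      abel
    rw [key]
    exact Iη.add_mem (Submodule.sum_mem _ fun i _ => mulmem _ _ (hb _))
      (lemC _ (ha h) b hb)
  -- h ▷ μ(g) = μ(Σ h₁ g S(h₂))
  have lemK1 : ∀ (h g : H) (r : Coalgebra.Repr ℂ h (H × H)),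
      act h (μ g) = μ (∑ i ∈ r.index,
        r.left i * g * HopfAlgebra.antipode (R := ℂ) (r.right i)) := by
    intro h g r
    set S : H →ₗ[ℂ] H := HopfAlgebra.antipode (R := ℂ) with hS
    let a₁ : ∀ i : r.ι, Coalgebra.Repr ℂ (r.left i) (H × H) := fun i => Coalgebra.Repr.arbitrary ℂ _
    let a₂ : ∀ i : r.ι, Coalgebra.Repr ℂ (r.right i) (H × H) := fun i => Coalgebra.Repr.arbitrary ℂ _
    let Ψ : H ⊗[ℂ] (H ⊗[ℂ] H) →ₗ[ℂ] D :=
      LinearMap.mul' ℂ D ∘ₗ TensorProduct.map (act.flip (μ g))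
        (TensorProduct.lift (((LinearMap.mul ℂ H).compl₂ S).compr₂ μ.toLinearMap))
    have hΨ : ∀ x y z : H, Ψ (x ⊗ₜ[ℂ] (y ⊗ₜ[ℂ] z)) = act x (μ g) * μ (y * S z) := by
      intro x y z
      simp [Ψ, LinearMap.mul'_apply, TensorProduct.map_tmul, TensorProduct.lift.tmul,
        LinearMap.compr₂_apply, LinearMap.compl₂_apply, LinearMap.mul_apply',
        LinearMap.flip_apply]
    have coas := congrArg Ψ (Coalgebra.sum_tmul_tmul_eq (R := ℂ) r a₁ a₂)
    simp only [map_sum, hΨ] at coas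
    -- right side of coas collapses to act h (μ g)
    have hrhs : ∑ i ∈ r.index, ∑ j ∈ (a₂ i).index,
        act (r.left i) (μ g) * μ ((a₂ i).left j * S ((a₂ i).right j)) = act h (μ g) := by
      have e : ∀ i ∈ r.index, ∑ j ∈ (a₂ i).index,
          act (r.left i) (μ g) * μ ((a₂ i).left j * S ((a₂ i).right j))
          = Coalgebra.counit (R := ℂ) (r.right i) • act (r.left i) (μ g) := by
        intro i _
        rw [← Finset.mul_sum, ← map_sum, HopfAlgebra.sum_mul_antipode_eq_smul (a₂ i),
          map_smul, map_one, mul_smul_comm, mul_one]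
      rw [Finset.sum_congr rfl e, act_sum h (μ g) r]
    -- left side of coas equals μ (Σ h₁ g S h₂)
    have hlhs : μ (∑ i ∈ r.index, r.left i * g * S (r.right i))
        = ∑ i ∈ r.index, ∑ j ∈ (a₁ i).index,
            act ((a₁ i).left j) (μ g) * μ ((a₁ i).right j * S (r.right i)) := by
      rw [map_sum]
      refine Finset.sum_congr rfl fun i _ => ?_
      rw [map_mul, map_mul, hμ' (r.left i) (μ g) (a₁ i), Finset.sum_mul]
      refine Finset.sum_congr rfl fun j _ => ?_
      rw [mul_assoc, ← map_mul]
    rw [hlhs, coas, hrhs]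
  -- invariance of 1, sums, scalar multiples
  have inv_one : Inv 1 := fun h => by rw [hunit]; simp
  have inv_add : ∀ a b : D, Inv a → Inv b → Inv (a + b) := by
    intro a b ha hb h
    have e : act h (a + b) - Coalgebra.counit (R := ℂ) h • (a + b)
        = (act h a - Coalgebra.counit (R := ℂ) h • a)
          + (act h b - Coalgebra.counit (R := ℂ) h • b) := by
      rw [map_add, smul_add]; abel
    rw [e]; exact Iη.add_mem (ha h) (hb h)
  have inv_smul : ∀ (c : ℂ) (a : D), Inv a → Inv (c • a) := by
    intro c a ha h
    have e : act h (c • a) - Coalgebra.counit (R := ℂ) h • (c • a)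
        = c • (act h a - Coalgebra.counit (R := ℂ) h • a) := by
      rw [map_smul, smul_sub, smul_comm]
    rw [e]; exact smulmem _ _ (ha h)
  -- Part 1 : Iη is an H-submodule
  have part1 : ∀ (h : H) (a : D), a ∈ Iη → act h a ∈ Iη := by
    intro h x hx
    refine Submodule.span_induction (p := fun x _ => ∀ h' : H, act h' x ∈ Iη)
      ?_ ?_ ?_ ?_ hx h
    · rintro _ ⟨g, rfl⟩ h'
      set S : H →ₗ[ℂ] H := HopfAlgebra.antipode (R := ℂ) with hS
      set r := Coalgebra.Repr.arbitrary ℂ h' with hr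
      have e : act h' (μ g - algebraMap ℂ D (η g))
          = act h' (μ g) - (η g * Coalgebra.counit (R := ℂ) h') • (1 : D) := by
        rw [map_sub]
        congr 1
        rw [Algebra.algebraMap_eq_smul_one, map_smul, hunit, smul_smul]
      rw [e, lemK1 h' g r]
      set T : H := ∑ i ∈ r.index, r.left i * g * S (r.right i) with hT
      have hηT : η T = η g * Coalgebra.counit (R := ℂ) h' := by
        rw [hT, map_sum]
        have e2 : ∀ i ∈ r.index, η (r.left i * g * S (r.right i))
            = η g * η (r.left i * S (r.right i)) := by
          intro i _
          rw [map_mul, map_mul, map_mul]; ring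
        rw [Finset.sum_congr rfl e2, ← Finset.mul_sum, ← map_sum,
          HopfAlgebra.sum_mul_antipode_eq_smul r, map_smul, map_one, smul_eq_mul, mul_one]
      have e3 : μ T - (η g * Coalgebra.counit (R := ℂ) h') • (1 : D)
          = μ T - algebraMap ℂ D (η T) := by
        rw [hηT, Algebra.algebraMap_eq_smul_one]
      rw [e3]; exact gen_mem T
    · intro h'; simp
    · intro x y _ _ ihx ihy h'
      rw [map_add]; exact Iη.add_mem (ihx h') (ihy h')
    · intro d x _ ih h'
      rw [smul_eq_mul, hma' h' d x (Coalgebra.Repr.arbitrary ℂ h')]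
      exact Submodule.sum_mem _ fun i _ => mulmem _ _ (ih _)
  -- well-definedness of the induced product
  have wd : ∀ a b a' b' : D, Inv b → Inv b' → mk a = mk a' → mk b = mk b' →
      mk (a * b) = mk (a' * b') := by
    intro a b a' b' hb hb' haa hbb
    rw [Submodule.Quotient.eq] at haa hbb ⊢
    have e : a * b - a' * b' = a * (b - b') + (a - a') * b' := by
      rw [mul_sub, sub_mul]; abel
    rw [e]
    exact Iη.add_mem (mulmem _ _ hbb) (lemC _ haa b' hb')
  let mulF : (D ⧸ Iη) → (D ⧸ Iη) → (D ⧸ Iη) := fun x y =>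
    if hc : (∃ a, Inv a ∧ mk a = x) ∧ (∃ b, Inv b ∧ mk b = y)
    then mk (hc.1.choose * hc.2.choose) else 0
  have mulF_mk : ∀ a b : D, Inv a → Inv b → mulF (mk a) (mk b) = mk (a * b) := by
    intro a b ha hb
    have hc : (∃ a', Inv a' ∧ mk a' = mk a) ∧ (∃ b', Inv b' ∧ mk b' = mk b) :=
      ⟨⟨a, ha, rfl⟩, ⟨b, hb, rfl⟩⟩
    have e : mulF (mk a) (mk b) = mk (hc.1.choose * hc.2.choose) := dif_pos hc
    rw [e]
    exact wd _ _ _ _ hc.2.choose_spec.1 hb hc.1.choose_spec.2 hc.2.choose_spec.2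
  refine ⟨part1, mulF, mulF_mk, ?_, ?_, ⟨1, inv_one, rfl⟩, ?_, ?_, ?_⟩
  · rintro x y ⟨a, ha, rfl⟩ ⟨b, hb, rfl⟩
    exact ⟨a * b, lemD a b ha hb, (mulF_mk a b ha hb).symm⟩
  · rintro x y z ⟨a, ha, rfl⟩ ⟨b, hb, rfl⟩ ⟨c, hc, rfl⟩
    rw [mulF_mk a b ha hb, mulF_mk b c hb hc, mulF_mk _ c (lemD a b ha hb) hc,
      mulF_mk a _ ha (lemD b c hb hc), mul_assoc]
  · rintro x ⟨a, ha, rfl⟩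
    rw [mulF_mk 1 a inv_one ha, mulF_mk a 1 ha inv_one, one_mul, mul_one]
    exact ⟨rfl, rfl⟩
  · rintro x y z ⟨a, ha, rfl⟩ ⟨b, hb, rfl⟩ ⟨c, hc, rfl⟩
    have hbc : (mk b + mk c : D ⧸ Iη) = mk (b + c) := (Submodule.Quotient.mk_add Iη).symm
    constructor
    · rw [hbc, mulF_mk a _ ha (inv_add b c hb hc), mulF_mk a b ha hb, mulF_mk a c ha hc,
        mul_add]
      exact Submodule.Quotient.mk_add Iη
    · rw [hbc, mulF_mk _ a (inv_add b c hb hc) ha, mulF_mk b a hb ha, mulF_mk c a hc ha,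
        add_mul]
      exact Submodule.Quotient.mk_add Iη
  · rintro c x y ⟨a, ha, rfl⟩ ⟨b, hb, rfl⟩
    have hsa : (c • mk a : D ⧸ Iη) = mk (c • a) := (Submodule.Quotient.mk_smul _ _ _).symm
    have hsb : (c • mk b : D ⧸ Iη) = mk (c • b) := (Submodule.Quotient.mk_smul _ _ _).symm
    constructor
    · rw [hsa, mulF_mk _ b (inv_smul c a ha) hb, mulF_mk a b ha hb, smul_mul_assoc]
      exact Submodule.Quotient.mk_smul Iη c _
    · rw [hsb, mulF_mk a _ ha (inv_smul c b hb), mulF_mk a b ha hb, mul_smul_comm]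
      exact Submodule.Quotient.mk_smul Iη c _
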